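/- Let W = (P, Γ, Δ, S) be a weighted pushdown system over an idempotent semiring S whose order ⊑ is total and in which extend preserves inequality, and fix c_f = p_f ε. Suppose the Kleene sequence of the finite equation system (2) stabilizes, i.e., for some k its value λ satisfies λ = ks(k) = ks(k+1) (so λ is the greatest fixed point of (2)). Define μ by: μ_{[pX_1⋯X_m]} = ⨁_{p_1,…,p_{m−1} ∈ P} (λ_{[pX_1p_1]} ⊗ λ_{[p_1X_2p_2]} ⊗ ⋯ ⊗ λ_{[p_{m−1}X_mp_f]}) for m ≥ 1, and μ_{[pε]} = 1̄ if p = p_f and 0̄ otherwise. Then μ is the greatest fixed point of the (infinite) equation system (1). (Theorem 2, positive case.) -/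

import Mathlib

universe u v w

/-- An idempotent semiring `(D, ⊕, ⊗, 0̄, 1̄)` (Definition 1). -/
structure IdemSemiring' (D : Type u) where
  add : D → D → D
  mul : D → D → D
  zero : D
  one : D
  add_assoc : ∀ a b c, add (add a b) c = add a (add b c)
  add_comm : ∀ a b, add a b = add b a
  add_zero : ∀ a, add a zero = a
  mul_assoc : ∀ a b c, mul (mul a b) c = mul a (mul b c)
  one_mul : ∀ a, mul one a = a
  mul_one : ∀ a, mul a one = a
  mul_add : ∀ a b c, mul a (add b c) = add (mul a b) (mul a c)
  add_mul : ∀ a b c, mul (add a b) c = add (mul a c) (mul b c)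
  mul_zero : ∀ a, mul a zero = zero
  zero_mul : ∀ a, mul zero a = zero
  add_idem : ∀ a, add a a = a

/-- The natural order: `a ⊑ b` iff `a ⊕ b = a` (Definition 2). -/
def IdemSemiring'.le {D : Type u} (S : IdemSemiring' D) (a b : D) : Prop :=
  S.add a b = a

/-- Extend preserves inequality: `a ≠ b → a ⊗ c ≠ b ⊗ c` for `a, b, c ≠ 0̄` (Definition 3). -/
def PreservesIneq {D : Type u} (S : IdemSemiring' D) : Prop :=
  ∀ a b c : D, a ≠ S.zero → b ≠ S.zero → c ≠ S.zero → a ≠ b → S.mul a c ≠ S.mul b c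

/-- Combine `⨁` of a list of semiring elements (`0̄` for the empty list). -/
def combineList {D : Type u} (S : IdemSemiring' D) (l : List D) : D :=
  l.foldr S.add S.zero

/-- Extend `⨂` of a list of semiring elements (`1̄` for the empty list). -/
def prodList {D : Type u} (S : IdemSemiring' D) (l : List D) : D :=
  l.foldr S.mul S.one

/-- A rule `pX —d→ qα` of a weighted pushdown system. -/
structure PDSRule (P : Type v) (Γ : Type w) (D : Type u) where
  p : P
  X : Γ
  d : D
  q : P
  α : List Γ

/-- A configuration `pγ`. -/
abbrev PDSConfig (P : Type v) (Γ : Type w) := P × List Γ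

/-- One step using rule `r` : `pXγ ⟶ᵣ qαγ`. -/
def StepBy {P : Type v} {Γ : Type w} {D : Type u} (r : PDSRule P Γ D)
    (c c' : PDSConfig P Γ) : Prop :=
  ∃ γ : List Γ, c = (r.p, r.X :: γ) ∧ c' = (r.q, r.α ++ γ)

/-- `Steps σ c c'` : the rule sequence `σ` leads from `c` to `c'`. -/
def Steps {P : Type v} {Γ : Type w} {D : Type u} :
    List (PDSRule P Γ D) → PDSConfig P Γ → PDSConfig P Γ → Prop
  | [], c, c' => c = c'
  | r :: σ, c, c' => ∃ c'', StepBy r c c'' ∧ Steps σ c'' c'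

/-- The weight `v(σ) = d_{r₁} ⊗ ⋯ ⊗ d_{r_n}` of a rule sequence (with `v(ε) = 1̄`). -/
def seqWeight {P : Type v} {Γ : Type w} {D : Type u} (S : IdemSemiring' D)
    (σ : List (PDSRule P Γ D)) : D :=
  σ.foldr (fun r acc => S.mul r.d acc) S.one

/-- Applies rule `r` to configuration `c`, if possible. -/
def applyRule? {P : Type v} {Γ : Type w} {D : Type u} [DecidableEq P] [DecidableEq Γ]
    (r : PDSRule P Γ D) (c : PDSConfig P Γ) : Option (PDSConfig P Γ) :=
  match c.2 with
  | [] => none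
  | X :: γ => if r.p = c.1 ∧ r.X = X then some (r.q, r.α ++ γ) else none

/-- `I(c)` : `1̄` if `c = c_f` and `0̄` otherwise. -/
def Ifun {P : Type v} {Γ : Type w} {D : Type u} [DecidableEq P] [DecidableEq Γ]
    (S : IdemSemiring' D) (cf c : PDSConfig P Γ) : D :=
  if c = cf then S.one else S.zero

/-- Right-hand side of equation system (1): `[c] = I(c) ⊕ ⨁_{c ⟶ᵣ c'} (d_r ⊗ [c'])`. -/
def rhs1 {P : Type v} {Γ : Type w} {D : Type u} [DecidableEq P] [DecidableEq Γ]
    (S : IdemSemiring' D) (Δ : List (PDSRule P Γ D)) (cf : PDSConfig P Γ)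
    (g : PDSConfig P Γ → D) (c : PDSConfig P Γ) : D :=
  S.add (Ifun S cf c)
    (Δ.foldr (fun r acc =>
      S.add (match applyRule? r c with
             | some c' => S.mul r.d (g c')
             | none => S.zero) acc) S.zero)

/-- The Kleene sequence of equation system (1), starting from the all-`0̄` assignment. -/
def ks1 {P : Type v} {Γ : Type w} {D : Type u} [DecidableEq P] [DecidableEq Γ]
    (S : IdemSemiring' D) (Δ : List (PDSRule P Γ D)) (cf : PDSConfig P Γ) :
    ℕ → PDSConfig P Γ → D
  | 0 => fun _ => S.zero
  | k + 1 => rhs1 S Δ cf (ks1 S Δ cf k)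

/-- Right-hand side of equation system (2) for the pop-sequence variables `[pXq]` :
`[pXq] = ⨁_{pX—d→qε} d ⊕ ⨁_{pX—d→rY} (d ⊗ [rYq]) ⊕ ⨁_{pX—d→rYZ} (d ⊗ ⨁_{s} ([rYs] ⊗ [sZq]))`. -/
noncomputable def rhs2 {P : Type v} {Γ : Type w} {D : Type u}
    [Fintype P] [DecidableEq P] [DecidableEq Γ]
    (S : IdemSemiring' D) (Δ : List (PDSRule P Γ D))
    (g : P × Γ × P → D) : P × Γ × P → D :=
  fun x =>
    match x with
    | (p, X, q) =>
      Δ.foldr (fun r acc =>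
        S.add
          (if r.p = p ∧ r.X = X then
            match r.α with
            | [] => if r.q = q then r.d else S.zero
            | [Y] => S.mul r.d (g (r.q, Y, q))
            | [Y, Z] =>
                S.mul r.d
                  (combineList S ((Finset.univ : Finset P).toList.map
                    (fun s => S.mul (g (r.q, Y, s)) (g (s, Z, q)))))
            | _ => S.zero
           else S.zero)
          acc) S.zero

/-- The Kleene sequence of equation system (2), starting from the all-`0̄` assignment. -/
noncomputable def ks2 {P : Type v} {Γ : Type w} {D : Type u}
    [Fintype P] [DecidableEq P] [DecidableEq Γ]
    (S : IdemSemiring' D) (Δ : List (PDSRule P Γ D)) :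
    ℕ → P × Γ × P → D
  | 0 => fun _ => S.zero
  | k + 1 => rhs2 S Δ (ks2 S Δ k)

/-- `σ` is a pop sequence for `(p, X, q)` over the rules `Δ` : `pX ⟶_σ qε`. -/
def PopSeq {P : Type v} {Γ : Type w} {D : Type u}
    (Δ σ : List (PDSRule P Γ D)) (p : P) (X : Γ) (q : P) : Prop :=
  (∀ r ∈ σ, r ∈ Δ) ∧ Steps σ (p, [X]) (q, ([] : List Γ))

/-- The vector `μ` of equation (3), built from a solution `lam` of equation system (2):
`μ_{[pX₁⋯X_m]} = ⨁_{p₁,…,p_{m−1}} (lam[pX₁p₁] ⊗ lam[p₁X₂p₂] ⊗ ⋯ ⊗ lam[p_{m−1}X_mp_f])`,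
the combine ranging over all tuples of intermediate control states; in particular
`μ_{[pε]} = 1̄` if `p = p_f` and `0̄` otherwise. -/
noncomputable def muDef {P : Type v} {Γ : Type w} {D : Type u} [Fintype P] [DecidableEq P]
    (S : IdemSemiring' D) (lam : P × Γ × P → D) (pf : P) (c : PDSConfig P Γ) : D :=
  combineList S
    ((((Finset.univ : Finset (Fin (c.2.length + 1) → P)).filter
        (fun ps => ps 0 = c.1 ∧ ps (Fin.last c.2.length) = pf)).toList).map
      (fun ps => prodList S (List.ofFn (fun i : Fin c.2.length =>
        lam (ps i.castSucc, c.2.get i, ps i.succ)))))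

namespace Aux
variable {D : Type u} (S : IdemSemiring' D)

theorem le_refl (a : D) : S.le a a := S.add_idem a

theorem le_trans {a b c : D} (h1 : S.le a b) (h2 : S.le b c) : S.le a c := by
  unfold IdemSemiring'.le at *
  rw [← h1, S.add_assoc, h2]

theorem le_antisymm {a b : D} (h1 : S.le a b) (h2 : S.le b a) : a = b := by
  calc a = S.add a b := h1.symm
    _ = S.add b a := S.add_comm a b
    _ = b := h2

theorem le_zero (a : D) : S.le a S.zero := S.add_zero a

theorem add_le_left (a b : D) : S.le (S.add a b) a := by
  show S.add (S.add a b) a = S.add a b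
  rw [S.add_comm a b, S.add_assoc, S.add_idem, S.add_comm b a]

theorem add_le_right (a b : D) : S.le (S.add a b) b := by
  show S.add (S.add a b) b = S.add a b
  rw [S.add_assoc, S.add_idem]

theorem le_add {x a b : D} (h1 : S.le x a) (h2 : S.le x b) : S.le x (S.add a b) := by
  show S.add x (S.add a b) = x
  rw [← S.add_assoc]
  show S.add (S.add x a) b = x
  rw [h1, h2]

theorem add_le_add {a b c d : D} (h1 : S.le a b) (h2 : S.le c d) :
    S.le (S.add a c) (S.add b d) :=
  le_add S (le_trans S (add_le_left S a c) h1) (le_trans S (add_le_right S a c) h2)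

theorem le_mul_right {a b : D} (c : D) (h : S.le a b) : S.le (S.mul a c) (S.mul b c) := by
  show S.add (S.mul a c) (S.mul b c) = S.mul a c
  rw [← S.add_mul, h]

theorem le_mul_left {c d : D} (a : D) (h : S.le c d) : S.le (S.mul a c) (S.mul a d) := by
  show S.add (S.mul a c) (S.mul a d) = S.mul a c
  rw [← S.mul_add, h]

theorem mul_le_mul {a b c d : D} (h1 : S.le a b) (h2 : S.le c d) :
    S.le (S.mul a c) (S.mul b d) :=
  le_trans S (le_mul_right S c h1) (le_mul_left S b h2)

theorem combine_le_of_mem {l : List D} {x : D} (h : x ∈ l) : S.le (combineList S l) x := by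
  induction l with
  | nil => cases h
  | cons a t ih =>
    rcases List.mem_cons.mp h with rfl | h'
    · exact add_le_left S _ _
    · exact le_trans S (add_le_right S a (combineList S t)) (ih h')

theorem le_combine {x : D} {l : List D} (h : ∀ y ∈ l, S.le x y) : S.le x (combineList S l) := by
  induction l with
  | nil => exact le_zero S x
  | cons a t ih => exact le_add S (h a (by simp)) (ih fun y hy => h y (by simp [hy]))

theorem combine_eq_of_mem_iff {l₁ l₂ : List D} (h : ∀ y, y ∈ l₁ ↔ y ∈ l₂) :
    combineList S l₁ = combineList S l₂ :=
  le_antisymm S (le_combine S fun y hy => combine_le_of_mem S ((h y).mpr hy))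
    (le_combine S fun y hy => combine_le_of_mem S ((h y).mp hy))

theorem mul_combine (d : D) (l : List D) :
    S.mul d (combineList S l) = combineList S (l.map (S.mul d)) := by
  induction l with
  | nil => exact S.mul_zero d
  | cons a t ih =>
    show S.mul d (S.add a (combineList S t)) = S.add (S.mul d a) (combineList S (t.map (S.mul d)))
    rw [S.mul_add, ih]

theorem combine_mul (l : List D) (e : D) :
    S.mul (combineList S l) e = combineList S (l.map fun x => S.mul x e) := by
  induction l with
  | nil => exact S.zero_mul e
  | cons a t ih =>
    show S.mul (S.add a (combineList S t)) e = S.add (S.mul a e) (combineList S (t.map fun x => S.mul x e))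
    rw [S.add_mul, ih]

theorem combine_append (l₁ l₂ : List D) :
    combineList S (l₁ ++ l₂) = S.add (combineList S l₁) (combineList S l₂) := by
  induction l₁ with
  | nil =>
    show combineList S l₂ = S.add S.zero (combineList S l₂)
    rw [S.add_comm, S.add_zero]
  | cons a t ih =>
    show S.add a (combineList S (t ++ l₂)) = S.add (S.add a (combineList S t)) (combineList S l₂)
    rw [ih, S.add_assoc]

theorem combine_flatMap {α : Type*} (l : List α) (f : α → List D) :
    combineList S (l.flatMap f) = combineList S (l.map fun a => combineList S (f a)) := by
  induction l with
  | nil => rfl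
  | cons a t ih =>
    rw [List.flatMap_cons, combine_append, ih]
    rfl

theorem foldr_add {α : Type*} (t : α → D) (l : List α) :
    l.foldr (fun r acc => S.add (t r) acc) S.zero = combineList S (l.map t) := by
  induction l with
  | nil => rfl
  | cons a l ih =>
    show S.add (t a) _ = S.add (t a) _
    rw [ih]
    rfl

end Aux
namespace AuxPDS
variable {D : Type u} {P : Type v} {Γ : Type w}

theorem seqWeight_append (S : IdemSemiring' D) (σ₁ σ₂ : List (PDSRule P Γ D)) :
    seqWeight S (σ₁ ++ σ₂) = S.mul (seqWeight S σ₁) (seqWeight S σ₂) := by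
  induction σ₁ with
  | nil =>
    rw [List.nil_append]
    exact (S.one_mul _).symm
  | cons r t ih =>
    show S.mul r.d (seqWeight S (t ++ σ₂)) = S.mul (S.mul r.d (seqWeight S t)) (seqWeight S σ₂)
    rw [ih, S.mul_assoc]

theorem steps_empty {σ : List (PDSRule P Γ D)} {p : P} {c' : PDSConfig P Γ}
    (h : Steps σ (p, ([] : List Γ)) c') : σ = [] ∧ c' = (p, ([] : List Γ)) := by
  cases σ with
  | nil => exact ⟨rfl, (h : (p, ([] : List Γ)) = c').symm⟩
  | cons r σ =>
    obtain ⟨c'', ⟨γ, hc, _⟩, _⟩ := h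
    exact absurd (congrArg Prod.snd hc) (by simp)

theorem steps_split {σ : List (PDSRule P Γ D)} {p q : P} {γ₁ γ₂ : List Γ}
    (h : Steps σ (p, γ₁ ++ γ₂) (q, ([] : List Γ))) :
    ∃ σ₁ σ₂ s, σ = σ₁ ++ σ₂ ∧ Steps σ₁ (p, γ₁) (s, ([] : List Γ)) ∧
      Steps σ₂ (s, γ₂) (q, ([] : List Γ)) := by
  induction σ generalizing p γ₁ with
  | nil =>
    have h' : (p, γ₁ ++ γ₂) = (q, ([] : List Γ)) := h
    have hp : p = q := congrArg Prod.fst h'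
    have hγ : γ₁ ++ γ₂ = [] := congrArg Prod.snd h'
    rw [List.append_eq_nil_iff] at hγ
    exact ⟨[], [], p, rfl, show (p, γ₁) = (p, ([] : List Γ)) by rw [hγ.1],
      show (p, γ₂) = (q, ([] : List Γ)) by rw [hγ.2, hp]⟩
  | cons r σ ih =>
    cases γ₁ with
    | nil =>
      exact ⟨[], r :: σ, p, rfl, rfl, h⟩
    | cons X δ =>
      obtain ⟨cm, ⟨γ, hc, hcm⟩, ht⟩ := h
      have hp : p = r.p := congrArg Prod.fst hc
      have hstk : X :: (δ ++ γ₂) = r.X :: γ := congrArg Prod.snd hc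
      have hX : X = r.X := (List.cons.injEq _ _ _ _ ▸ hstk).1
      have hγ : δ ++ γ₂ = γ := (List.cons.injEq _ _ _ _ ▸ hstk).2
      subst hcm
      have ht' : Steps σ (r.q, (r.α ++ δ) ++ γ₂) (q, ([] : List Γ)) := by
        rw [List.append_assoc, hγ]; exact ht
      obtain ⟨σ₁, σ₂, s, rfl, h1, h2⟩ := ih ht'
      refine ⟨r :: σ₁, σ₂, s, rfl, ⟨(r.q, r.α ++ δ), ⟨δ, ?_, rfl⟩, h1⟩, h2⟩
      rw [hp, hX]

theorem applyRule_some [DecidableEq P] [DecidableEq Γ] {r : PDSRule P Γ D}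
    {c c' : PDSConfig P Γ} (h : applyRule? r c = some c') : StepBy r c c' := by
  obtain ⟨p, stk⟩ := c
  cases stk with
  | nil => simp [applyRule?] at h
  | cons X γ =>
    by_cases hc : r.p = p ∧ r.X = X
    · simp only [applyRule?] at h
      rw [if_pos hc] at h
      exact ⟨γ, by rw [hc.1, hc.2], (Option.some.inj h).symm⟩
    · simp [applyRule?, hc] at h

theorem stepBy_apply [DecidableEq P] [DecidableEq Γ] {r : PDSRule P Γ D}
    {c c' : PDSConfig P Γ} (h : StepBy r c c') : applyRule? r c = some c' := by
  obtain ⟨γ, hc, hc'⟩ := h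
  rw [hc, hc']
  simp [applyRule?]

end AuxPDS
namespace AuxKS
open Aux AuxPDS
variable {D : Type u} {P : Type v} {Γ : Type w}

theorem rhs1_eq [DecidableEq P] [DecidableEq Γ] (S : IdemSemiring' D)
    (Δ : List (PDSRule P Γ D)) (cf : PDSConfig P Γ) (g : PDSConfig P Γ → D) (c : PDSConfig P Γ) :
    rhs1 S Δ cf g c = S.add (Ifun S cf c) (combineList S (Δ.map fun r =>
      match applyRule? r c with
      | some c' => S.mul r.d (g c')
      | none => S.zero)) := by
  unfold rhs1
  rw [foldr_add]

theorem rhs2_eq [Fintype P] [DecidableEq P] [DecidableEq Γ] (S : IdemSemiring' D)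
    (Δ : List (PDSRule P Γ D)) (g : P × Γ × P → D) (p : P) (X : Γ) (q : P) :
    rhs2 S Δ g (p, X, q) = combineList S (Δ.map fun r =>
      if r.p = p ∧ r.X = X then
        match r.α with
        | [] => if r.q = q then r.d else S.zero
        | [Y] => S.mul r.d (g (r.q, Y, q))
        | [Y, Z] =>
            S.mul r.d
              (combineList S ((Finset.univ : Finset P).toList.map
                (fun s => S.mul (g (r.q, Y, s)) (g (s, Z, q)))))
        | _ => S.zero
      else S.zero) := by
  unfold rhs2
  exact foldr_add S _ Δ

theorem ks1_succ [DecidableEq P] [DecidableEq Γ] (S : IdemSemiring' D)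
    (Δ : List (PDSRule P Γ D)) (cf : PDSConfig P Γ) (n : ℕ) :
    ks1 S Δ cf (n + 1) = rhs1 S Δ cf (ks1 S Δ cf n) := rfl

theorem ks1_step [DecidableEq P] [DecidableEq Γ] (S : IdemSemiring' D)
    {Δ : List (PDSRule P Γ D)} {cf : PDSConfig P Γ} {r : PDSRule P Γ D}
    {c c' : PDSConfig P Γ} (hr : r ∈ Δ) (h : applyRule? r c = some c') (n : ℕ) :
    S.le (ks1 S Δ cf (n + 1) c) (S.mul r.d (ks1 S Δ cf n c')) := by
  rw [ks1_succ, rhs1_eq]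
  refine le_trans S (add_le_right S _ _) (combine_le_of_mem S (List.mem_map.mpr ⟨r, hr, ?_⟩))
  rw [h]

theorem combine_map_mono {α : Type*} (S : IdemSemiring' D) {l : List α} {t₁ t₂ : α → D}
    (h : ∀ a ∈ l, S.le (t₁ a) (t₂ a)) :
    S.le (combineList S (l.map t₁)) (combineList S (l.map t₂)) := by
  refine le_combine S ?_
  intro y hy
  obtain ⟨a, ha, rfl⟩ := List.mem_map.mp hy
  exact le_trans S (combine_le_of_mem S (List.mem_map.mpr ⟨a, ha, rfl⟩)) (h a ha)

theorem rhs1_mono [DecidableEq P] [DecidableEq Γ] (S : IdemSemiring' D)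
    {Δ : List (PDSRule P Γ D)} {cf : PDSConfig P Γ} {g h : PDSConfig P Γ → D}
    (hg : ∀ c, S.le (g c) (h c)) (c : PDSConfig P Γ) :
    S.le (rhs1 S Δ cf g c) (rhs1 S Δ cf h c) := by
  rw [rhs1_eq, rhs1_eq]
  refine add_le_add S (le_refl S _) (combine_map_mono S ?_)
  intro r _
  cases hA : applyRule? r c with
  | none => simp only [hA]; exact le_refl S _
  | some c' => simp only [hA]; exact le_mul_left S r.d (hg c')

theorem ks1_antitone [DecidableEq P] [DecidableEq Γ] (S : IdemSemiring' D)
    {Δ : List (PDSRule P Γ D)} {cf : PDSConfig P Γ} {m n : ℕ} (h : m ≤ n)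
    (c : PDSConfig P Γ) : S.le (ks1 S Δ cf n c) (ks1 S Δ cf m c) := by
  induction n with
  | zero =>
    have : m = 0 := Nat.le_zero.mp h
    subst this
    exact le_refl S _
  | succ n ih =>
    rcases Nat.lt_or_ge m (n + 1) with h' | h'
    · have hmn : m ≤ n := Nat.lt_succ_iff.mp h'
      refine le_trans S ?_ (ih hmn)
      clear ih h hmn h'
      induction n generalizing c with
      | zero => exact le_zero S _
      | succ n ih2 =>
        rw [ks1_succ, ks1_succ]
        exact rhs1_mono S (fun c' => ih2 c') c
    · have : m = n + 1 := Nat.le_antisymm h h'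
      subst this
      exact le_refl S _

theorem ks1_upper [DecidableEq P] [DecidableEq Γ] (S : IdemSemiring' D)
    {Δ : List (PDSRule P Γ D)} {pf : P} (n : ℕ) :
    ∀ (e x : D) (c : PDSConfig P Γ),
      (∀ σ, (∀ r ∈ σ, r ∈ Δ) → Steps σ c (pf, ([] : List Γ)) →
        S.le x (S.mul e (seqWeight S σ))) →
      S.le x (S.mul e (ks1 S Δ (pf, ([] : List Γ)) n c)) := by
  induction n with
  | zero =>
    intro e x c _
    rw [show ks1 S Δ (pf, ([] : List Γ)) 0 c = S.zero from rfl, S.mul_zero]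
    exact le_zero S x
  | succ n ih =>
    intro e x c hσ
    rw [ks1_succ, rhs1_eq, S.mul_add]
    refine le_add S ?_ ?_
    · unfold Ifun
      by_cases hc : c = (pf, ([] : List Γ))
      · rw [if_pos hc]
        have h0 := hσ [] (by simp) hc
        rwa [show seqWeight S ([] : List (PDSRule P Γ D)) = S.one from rfl] at h0
      · rw [if_neg hc, S.mul_zero]
        exact le_zero S x
    · rw [mul_combine, List.map_map]
      refine le_combine S ?_
      intro y hy
      obtain ⟨r, hr, rfl⟩ := List.mem_map.mp hy
      show S.le x (S.mul e (match applyRule? r c with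
        | some c' => S.mul r.d (ks1 S Δ (pf, ([] : List Γ)) n c')
        | none => S.zero))
      cases hA : applyRule? r c with
      | none =>
        simp only [hA]
        rw [S.mul_zero]
        exact le_zero S x
      | some c' =>
        simp only [hA]
        rw [← S.mul_assoc]
        refine ih (S.mul e r.d) x c' ?_
        intro σ hσΔ hst
        have h1 := hσ (r :: σ) ?_ ⟨c', applyRule_some hA, hst⟩
        · rwa [show seqWeight S (r :: σ) = S.mul r.d (seqWeight S σ) from rfl,
            ← S.mul_assoc] at h1
        · intro r' hr'
          rcases List.mem_cons.mp hr' with rfl | h'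
          · exact hr
          · exact hσΔ _ h'

end AuxKS
namespace AuxLam
open Aux AuxPDS AuxKS
variable {D : Type u} {P : Type v} {Γ : Type w}

theorem lam_popseq [Fintype P] [DecidableEq P] [DecidableEq Γ] (S : IdemSemiring' D)
    {Δ : List (PDSRule P Γ D)} (hΔ : ∀ r ∈ Δ, r.α.length ≤ 2)
    {lam : P × Γ × P → D} (hfix : ∀ x, rhs2 S Δ lam x = lam x) :
    ∀ (n : ℕ) (σ : List (PDSRule P Γ D)), σ.length ≤ n → ∀ (p : P) (X : Γ) (q : P),
      PopSeq Δ σ p X q → S.le (lam (p, X, q)) (seqWeight S σ) := by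
  intro n
  induction n with
  | zero =>
    rintro σ hlen p X q ⟨_, hst⟩
    rw [List.length_eq_zero_iff.mp (Nat.le_zero.mp hlen)] at hst
    exact absurd (congrArg Prod.snd (hst : (p, [X]) = (q, ([] : List Γ)))) (by simp)
  | succ n ih =>
    rintro σ hlen p X q ⟨hsub, hst⟩
    cases σ with
    | nil =>
      exact absurd (congrArg Prod.snd (hst : (p, [X]) = (q, ([] : List Γ)))) (by simp)
    | cons r σ' =>
      obtain ⟨cm, ⟨γ, hc, hcm⟩, ht⟩ := hst
      have hp : p = r.p := congrArg Prod.fst hc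
      have hstk : [X] = r.X :: γ := congrArg Prod.snd hc
      have hX : X = r.X := (List.cons.injEq _ _ _ _ ▸ hstk).1
      have hγ : ([] : List Γ) = γ := (List.cons.injEq _ _ _ _ ▸ hstk).2
      subst hcm
      rw [← hγ, List.append_nil] at ht
      have hrΔ : r ∈ Δ := hsub r (by simp)
      have hlen' : σ'.length ≤ n := by simpa using hlen
      have hsub' : ∀ r' ∈ σ', r' ∈ Δ := fun r' h' => hsub r' (by simp [h'])
      rw [← hfix (p, X, q), rhs2_eq]
      refine le_trans S (combine_le_of_mem S (List.mem_map.mpr ⟨r, hrΔ, rfl⟩)) ?_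
      rw [if_pos ⟨hp.symm, hX.symm⟩]
      rcases hα : r.α with _ | ⟨Y, _ | ⟨Z, _ | rest⟩⟩
      · -- pop rule
        rw [hα] at ht
        obtain ⟨hσ', hq⟩ := steps_empty ht
        have hq' : r.q = q := (congrArg Prod.fst hq).symm
        subst hσ'
        show S.le (if r.q = q then r.d else S.zero) (seqWeight S [r])
        rw [if_pos hq']
        show S.le r.d (S.mul r.d S.one)
        rw [S.mul_one]
        exact le_refl S _
      · -- one-symbol rule
        rw [hα] at ht
        show S.le (S.mul r.d (lam (r.q, Y, q))) (S.mul r.d (seqWeight S σ'))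
        exact mul_le_mul S (le_refl S r.d) (ih σ' hlen' r.q Y q ⟨hsub', ht⟩)
      · -- push rule
        rw [hα] at ht
        obtain ⟨σ₁, σ₂, s, rfl, h1, h2⟩ := steps_split (γ₁ := [Y]) (γ₂ := [Z]) ht
        have hl := List.length_append (as := σ₁) (bs := σ₂)
        have hlen1 : σ₁.length ≤ n := by omega
        have hlen2 : σ₂.length ≤ n := by omega
        have k1 := ih σ₁ hlen1 r.q Y s ⟨fun r' h' => hsub' r' (by simp [h']), h1⟩
        have k2 := ih σ₂ hlen2 s Z q ⟨fun r' h' => hsub' r' (by simp [h']), h2⟩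
        show S.le (S.mul r.d (combineList S ((Finset.univ : Finset P).toList.map
            (fun s => S.mul (lam (r.q, Y, s)) (lam (s, Z, q))))))
          (S.mul r.d (seqWeight S (σ₁ ++ σ₂)))
        rw [seqWeight_append]
        refine le_trans S (mul_le_mul S (le_refl S r.d)
          (combine_le_of_mem S (List.mem_map.mpr
            ⟨s, Finset.mem_toList.mpr (Finset.mem_univ s), rfl⟩))) ?_
        exact mul_le_mul S (le_refl S r.d) (mul_le_mul S k1 k2)
      · exfalso
        have h2 := hΔ r hrΔ
        rw [hα] at h2
        simp at h2

theorem ks2_ks1 [Fintype P] [DecidableEq P] [DecidableEq Γ] (S : IdemSemiring' D)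
    {Δ : List (PDSRule P Γ D)} {pf : P} :
    ∀ (n : ℕ) (p : P) (X : Γ) (q : P) (γ : List Γ) (M : ℕ),
      S.le (ks1 S Δ (pf, ([] : List Γ)) (3 ^ n + M) (p, X :: γ))
        (S.mul (ks2 S Δ n (p, X, q)) (ks1 S Δ (pf, ([] : List Γ)) M (q, γ))) := by
  intro n
  induction n with
  | zero =>
    intro p X q γ M
    rw [show ks2 S Δ 0 (p, X, q) = S.zero from rfl, S.zero_mul]
    exact le_zero S _
  | succ n ih =>
    intro p X q γ M
    have hk3 : 1 ≤ 3 ^ n := Nat.one_le_pow _ _ (by norm_num)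
    have hpow : 3 ^ (n + 1) = 3 ^ n + 3 ^ n + 3 ^ n := by ring
    rw [show ks2 S Δ (n + 1) = rhs2 S Δ (ks2 S Δ n) from rfl, rhs2_eq, combine_mul,
      List.map_map]
    refine le_combine S ?_
    intro y hy
    obtain ⟨r, hrΔ, rfl⟩ := List.mem_map.mp hy
    show S.le (ks1 S Δ (pf, ([] : List Γ)) (3 ^ (n + 1) + M) (p, X :: γ))
      (S.mul (if r.p = p ∧ r.X = X then
        match r.α with
        | [] => if r.q = q then r.d else S.zero
        | [Y] => S.mul r.d (ks2 S Δ n (r.q, Y, q))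
        | [Y, Z] =>
            S.mul r.d
              (combineList S ((Finset.univ : Finset P).toList.map
                (fun s => S.mul (ks2 S Δ n (r.q, Y, s)) (ks2 S Δ n (s, Z, q)))))
        | _ => S.zero
       else S.zero) (ks1 S Δ (pf, ([] : List Γ)) M (q, γ)))
    by_cases hmatch : r.p = p ∧ r.X = X
    · rw [if_pos hmatch]
      obtain ⟨hp, hX⟩ := hmatch
      rcases hα : r.α with _ | ⟨Y, _ | ⟨Z, _ | rest⟩⟩
      · -- pop rule
        show S.le (ks1 S Δ (pf, ([] : List Γ)) (3 ^ (n + 1) + M) (p, X :: γ))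
          (S.mul (if r.q = q then r.d else S.zero) (ks1 S Δ (pf, ([] : List Γ)) M (q, γ)))
        by_cases hq : r.q = q
        · rw [if_pos hq]
          have happ : applyRule? r (p, X :: γ) = some (q, γ) := by
            simp [applyRule?, hp, hX, hα, hq]
          have he : 3 ^ (n + 1) + M = (3 ^ (n + 1) + M - 1) + 1 := by omega
          rw [he]
          exact le_trans S (ks1_step S hrΔ happ _) (mul_le_mul S (le_refl S r.d)
            (ks1_antitone S (by omega) _))
        · rw [if_neg hq, S.zero_mul]
          exact le_zero S _
      · -- one-symbol rule
        show S.le (ks1 S Δ (pf, ([] : List Γ)) (3 ^ (n + 1) + M) (p, X :: γ))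
          (S.mul (S.mul r.d (ks2 S Δ n (r.q, Y, q))) (ks1 S Δ (pf, ([] : List Γ)) M (q, γ)))
        have happ : applyRule? r (p, X :: γ) = some (r.q, Y :: γ) := by
          simp [applyRule?, hp, hX, hα]
        have he : 3 ^ (n + 1) + M = (3 ^ (n + 1) + M - 1) + 1 := by omega
        rw [he, S.mul_assoc]
        refine le_trans S (ks1_step S hrΔ happ _) (mul_le_mul S (le_refl S r.d) ?_)
        exact le_trans S (ks1_antitone S (by omega) _) (ih r.q Y q γ M)
      · -- push rule
        show S.le (ks1 S Δ (pf, ([] : List Γ)) (3 ^ (n + 1) + M) (p, X :: γ))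
          (S.mul (S.mul r.d (combineList S ((Finset.univ : Finset P).toList.map
              (fun s => S.mul (ks2 S Δ n (r.q, Y, s)) (ks2 S Δ n (s, Z, q))))))
            (ks1 S Δ (pf, ([] : List Γ)) M (q, γ)))
        have happ : applyRule? r (p, X :: γ) = some (r.q, Y :: Z :: γ) := by
          simp [applyRule?, hp, hX, hα]
        have he : 3 ^ (n + 1) + M = (3 ^ (n + 1) + M - 1) + 1 := by omega
        rw [he, S.mul_assoc, combine_mul, List.map_map]
        refine le_trans S (ks1_step S hrΔ happ _) (mul_le_mul S (le_refl S r.d) ?_)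
        refine le_combine S ?_
        intro y hy
        obtain ⟨s, _, rfl⟩ := List.mem_map.mp hy
        show S.le (ks1 S Δ (pf, ([] : List Γ)) (3 ^ (n + 1) + M - 1) (r.q, Y :: Z :: γ))
          (S.mul (S.mul (ks2 S Δ n (r.q, Y, s)) (ks2 S Δ n (s, Z, q)))
            (ks1 S Δ (pf, ([] : List Γ)) M (q, γ)))
        rw [S.mul_assoc]
        exact le_trans S (ks1_antitone S (by omega) _)
          (le_trans S (ih r.q Y s (Z :: γ) (3 ^ n + M))
            (le_mul_left S _ (ih s Z q γ M)))
      · -- longer push: contributes zero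
        show S.le (ks1 S Δ (pf, ([] : List Γ)) (3 ^ (n + 1) + M) (p, X :: γ))
          (S.mul S.zero (ks1 S Δ (pf, ([] : List Γ)) M (q, γ)))
        rw [S.zero_mul]
        exact le_zero S _
    · rw [if_neg hmatch, S.zero_mul]
      exact le_zero S _

end AuxLam
namespace AuxMu
open Aux AuxPDS AuxKS AuxLam
variable {D : Type u} {P : Type v} {Γ : Type w}

theorem muDef_nil [Fintype P] [DecidableEq P] (S : IdemSemiring' D)
    (lam : P × Γ × P → D) (pf p : P) :
    muDef S lam pf (p, ([] : List Γ)) = if p = pf then S.one else S.zero := by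
  unfold muDef
  by_cases h : p = pf
  · rw [if_pos h]
    have hset : ((Finset.univ : Finset (Fin (([] : List Γ).length + 1) → P)).filter
        (fun ps => ps 0 = (p, ([] : List Γ)).1 ∧ ps (Fin.last ([] : List Γ).length) = pf))
        = {fun _ => pf} := by
      ext ps
      simp only [Finset.mem_filter, Finset.mem_univ, true_and, Finset.mem_singleton]
      constructor
      · rintro ⟨h1, _⟩
        funext i
        have h0 : (i : ℕ) = 0 := Nat.lt_one_iff.mp i.isLt
        have hi : i = 0 := Fin.ext (by simp [h0])
        rw [hi]
        exact h1.trans h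
      · rintro rfl
        exact ⟨h.symm, rfl⟩
    rw [hset, Finset.toList_singleton]
    show S.add (prodList S (List.ofFn fun i : Fin 0 => _)) S.zero = S.one
    rw [List.ofFn_zero, S.add_zero]
    rfl
  · rw [if_neg h]
    have hset : ((Finset.univ : Finset (Fin (([] : List Γ).length + 1) → P)).filter
        (fun ps => ps 0 = (p, ([] : List Γ)).1 ∧ ps (Fin.last ([] : List Γ).length) = pf))
        = ∅ := by
      ext ps
      simp only [Finset.mem_filter, Finset.mem_univ, true_and, Finset.notMem_empty,
        iff_false, not_and]
      intro h1 h2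
      exact h (h1.symm.trans (by rw [show (Fin.last ([] : List Γ).length) = 0 from rfl] at h2; exact h2))
    rw [hset, Finset.toList_empty]
    rfl

theorem prodFn_cons (S : IdemSemiring' D) (lam : P × Γ × P → D) (X : Γ) (γ : List Γ)
    (ps : Fin (γ.length + 1 + 1) → P) :
    prodList S (List.ofFn fun i : Fin (γ.length + 1) =>
        lam (ps i.castSucc, (X :: γ).get i, ps i.succ))
      = S.mul (lam (ps 0, X, ps 1))
          (prodList S (List.ofFn fun i : Fin γ.length =>
            lam ((ps ∘ Fin.succ) i.castSucc, γ.get i, (ps ∘ Fin.succ) i.succ))) := by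
  rw [List.ofFn_succ]
  show S.mul _ _ = S.mul _ _
  congr 1

theorem muDef_cons [Fintype P] [DecidableEq P] (S : IdemSemiring' D)
    (lam : P × Γ × P → D) (pf p : P) (X : Γ) (γ : List Γ) :
    muDef S lam pf (p, X :: γ) =
      combineList S ((Finset.univ : Finset P).toList.map fun q =>
        S.mul (lam (p, X, q)) (muDef S lam pf (q, γ))) := by
  have hR : ((Finset.univ : Finset P).toList.map fun q =>
        S.mul (lam (p, X, q)) (muDef S lam pf (q, γ)))
      = (Finset.univ : Finset P).toList.map fun q =>
          combineList S ((((Finset.univ : Finset (Fin (γ.length + 1) → P)).filter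
              (fun ps => ps 0 = q ∧ ps (Fin.last γ.length) = pf)).toList).map
            fun ps => S.mul (lam (p, X, q)) (prodList S (List.ofFn fun i : Fin γ.length =>
              lam (ps i.castSucc, γ.get i, ps i.succ)))) := by
    refine List.map_congr_left ?_
    intro q _
    show S.mul (lam (p, X, q)) (muDef S lam pf (q, γ)) = _
    unfold muDef
    rw [mul_combine, List.map_map]
    rfl
  rw [hR, ← combine_flatMap]
  unfold muDef
  apply combine_eq_of_mem_iff
  intro y
  simp only [List.mem_map, List.mem_flatMap, Finset.mem_toList, Finset.mem_filter,
    Finset.mem_univ, true_and]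
  constructor
  · rintro ⟨ps, ⟨hps0, hpslast⟩, rfl⟩
    refine ⟨ps 1, ps ∘ Fin.succ, ⟨?_, ?_⟩, ?_⟩
    · show ps ((0 : Fin (γ.length + 1)).succ) = ps 1
      rw [Fin.succ_zero_eq_one]
    · show ps ((Fin.last γ.length).succ) = pf
      rw [Fin.succ_last]
      exact hpslast
    · rw [← hps0]
      exact (prodFn_cons S lam X γ ps).symm
  · rintro ⟨q, ps', ⟨hq0, hqlast⟩, rfl⟩
    refine ⟨Fin.cons p ps', ⟨Fin.cons_zero _ _, ?_⟩, ?_⟩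
    · show (Fin.cons p ps' : Fin (γ.length + 1 + 1) → P) (Fin.last (γ.length + 1)) = pf
      rw [← Fin.succ_last, Fin.cons_succ]
      exact hqlast
    · refine Eq.trans (prodFn_cons S lam X γ (Fin.cons p ps')) ?_
      congr 1
      rw [Fin.cons_zero, ← Fin.succ_zero_eq_one, Fin.cons_succ, hq0]

theorem mu_le_path [Fintype P] [DecidableEq P] [DecidableEq Γ] (S : IdemSemiring' D)
    {Δ : List (PDSRule P Γ D)} (hΔ : ∀ r ∈ Δ, r.α.length ≤ 2)
    {lam : P × Γ × P → D} (hfix : ∀ x, rhs2 S Δ lam x = lam x) (pf : P) :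
    ∀ (n : ℕ) (σ : List (PDSRule P Γ D)) (c : PDSConfig P Γ), σ.length ≤ n →
      (∀ r ∈ σ, r ∈ Δ) → Steps σ c (pf, ([] : List Γ)) →
      S.le (muDef S lam pf c) (seqWeight S σ) := by
  intro n
  induction n with
  | zero =>
    intro σ c hlen _ hst
    have hσ : σ = [] := List.length_eq_zero_iff.mp (Nat.le_zero.mp hlen)
    subst hσ
    have hc : c = (pf, ([] : List Γ)) := hst
    rw [hc, muDef_nil, if_pos rfl]
    exact le_refl S _
  | succ n ih =>
    intro σ c hlen hsub hst
    obtain ⟨p, stk⟩ := c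
    cases stk with
    | nil =>
      obtain ⟨hσ, hc⟩ := steps_empty hst
      subst hσ
      have hp : pf = p := congrArg Prod.fst hc
      rw [muDef_nil, if_pos hp.symm]
      exact le_refl S _
    | cons X γ =>
      obtain ⟨σ₁, σ₂, s, rfl, h1, h2⟩ := steps_split (γ₁ := [X]) (γ₂ := γ) hst
      cases σ₁ with
      | nil =>
        exact absurd (congrArg Prod.snd (h1 : (p, [X]) = (s, ([] : List Γ)))) (by simp)
      | cons r σ₁' =>
        have hlen2 : σ₂.length ≤ n := by
          rw [List.length_append] at hlen
          simp only [List.length_cons] at hlen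
          omega
        have k1 := lam_popseq S hΔ hfix (r :: σ₁').length (r :: σ₁') (Nat.le_refl _) p X s
          ⟨fun r' h' => hsub r' (List.mem_append.mpr (Or.inl h')), h1⟩
        have k2 := ih σ₂ (s, γ) hlen2
          (fun r' h' => hsub r' (List.mem_append.mpr (Or.inr h'))) h2
        rw [muDef_cons, seqWeight_append]
        refine le_trans S (combine_le_of_mem S (List.mem_map.mpr
          ⟨s, Finset.mem_toList.mpr (Finset.mem_univ s), rfl⟩)) ?_
        exact mul_le_mul S k1 k2

theorem ks1_le_mu [Fintype P] [DecidableEq P] [DecidableEq Γ] (S : IdemSemiring' D)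
    {Δ : List (PDSRule P Γ D)} {pf : P} (k : ℕ) :
    ∀ (γ : List Γ) (p : P),
      S.le (ks1 S Δ (pf, ([] : List Γ)) (γ.length * 3 ^ k + 1) (p, γ))
        (muDef S (ks2 S Δ k) pf (p, γ)) := by
  intro γ
  induction γ with
  | nil =>
    intro p
    rw [muDef_nil, show ([] : List Γ).length * 3 ^ k + 1 = 1 by simp, ks1_succ, rhs1_eq]
    by_cases hp : p = pf
    · rw [if_pos hp]
      refine le_trans S (add_le_left S _ _) ?_
      unfold Ifun
      rw [if_pos (by rw [hp])]
      exact le_refl S _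
    · rw [if_neg hp]
      exact le_zero S _
  | cons X γ ihγ =>
    intro p
    rw [muDef_cons]
    refine le_combine S ?_
    intro y hy
    obtain ⟨q, _, rfl⟩ := List.mem_map.mp hy
    have harith : (X :: γ).length * 3 ^ k + 1 = 3 ^ k + (γ.length * 3 ^ k + 1) := by
      simp only [List.length_cons]
      ring
    rw [harith]
    exact le_trans S (ks2_ks1 S k p X q γ (γ.length * 3 ^ k + 1))
      (le_mul_left S _ (ihγ q))

theorem ks1_stab [Fintype P] [DecidableEq P] [DecidableEq Γ] (S : IdemSemiring' D)
    {Δ : List (PDSRule P Γ D)} (hΔ : ∀ r ∈ Δ, r.α.length ≤ 2) {pf : P} (k : ℕ)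
    (hfix : ∀ x, rhs2 S Δ (ks2 S Δ k) x = ks2 S Δ k x)
    (c : PDSConfig P Γ) (n : ℕ) (hn : c.2.length * 3 ^ k + 1 ≤ n) :
    ks1 S Δ (pf, ([] : List Γ)) n c = muDef S (ks2 S Δ k) pf c := by
  refine le_antisymm S ?_ ?_
  · obtain ⟨p, γ⟩ := c
    exact le_trans S (ks1_antitone S hn _) (ks1_le_mu S k γ p)
  · have h := ks1_upper S (Δ := Δ) (pf := pf) n S.one (muDef S (ks2 S Δ k) pf c) c ?_
    · rwa [S.one_mul] at h
    · intro σ hσΔ hst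
      rw [S.one_mul]
      exact mu_le_path S hΔ hfix pf σ.length σ c (Nat.le_refl _) hσΔ hst

end AuxMu

open Aux AuxPDS AuxKS AuxLam AuxMu

/-- Theorem 2, positive case: if the Kleene sequence of the finite equation system (2)
stabilizes at `λ = ks(k) = ks(k+1)`, then the vector `μ` defined by equation (3) from `λ`
is the greatest fixed point of the infinite equation system (1). -/
theorem mu_is_gfp_of_eq1 {P : Type v} {Γ : Type w} {D : Type u}
    [Fintype P] [DecidableEq P] [Fintype Γ] [DecidableEq Γ]
    (S : IdemSemiring' D) (htot : ∀ a b : D, S.le a b ∨ S.le b a) (hpi : PreservesIneq S)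
    (Δ : List (PDSRule P Γ D)) (hΔ : ∀ r ∈ Δ, r.α.length ≤ 2) (pf : P)
    (k : ℕ) (hstab : ks2 S Δ k = ks2 S Δ (k + 1)) :
    (∀ c : PDSConfig P Γ,
      rhs1 S Δ (pf, ([] : List Γ)) (muDef S (ks2 S Δ k) pf) c = muDef S (ks2 S Δ k) pf c) ∧
    (∀ g : PDSConfig P Γ → D, (∀ c, rhs1 S Δ (pf, ([] : List Γ)) g c = g c) →
      ∀ c, S.le (g c) (muDef S (ks2 S Δ k) pf c)) := by
  have hfix : ∀ x, rhs2 S Δ (ks2 S Δ k) x = ks2 S Δ k x := fun x => (congrFun hstab x).symm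
  constructor
  · -- μ is a fixed point of (1)
    intro c
    obtain ⟨p, γ⟩ := c
    set N := (γ.length + 1) * 3 ^ k + 1 with hN
    have hk3 : 1 ≤ 3 ^ k := Nat.one_le_pow _ _ (by norm_num)
    have hexp : (γ.length + 1) * 3 ^ k = γ.length * 3 ^ k + 3 ^ k := by ring
    have hcong : rhs1 S Δ (pf, ([] : List Γ)) (muDef S (ks2 S Δ k) pf) (p, γ)
        = rhs1 S Δ (pf, ([] : List Γ)) (ks1 S Δ (pf, ([] : List Γ)) N) (p, γ) := by
      rw [rhs1_eq, rhs1_eq]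
      congr 1
      refine congrArg (combineList S) (List.map_congr_left ?_)
      intro r hr
      cases hA : applyRule? r (p, γ) with
      | none => simp only [hA]
      | some c' =>
        simp only [hA]
        congr 1
        refine (ks1_stab S hΔ k hfix c' N ?_).symm
        cases γ with
        | nil => simp [applyRule?] at hA
        | cons X γ' =>
          simp only [applyRule?] at hA
          by_cases hc : r.p = p ∧ r.X = X
          · rw [if_pos hc] at hA
            obtain rfl := Option.some.inj hA
            have hα := hΔ r hr
            have hlen2 : (r.α ++ γ').length ≤ γ'.length + 2 := by
              rw [List.length_append]
              omega
            have hmul := Nat.mul_le_mul_right (3 ^ k) hlen2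
            have hNeq : N = (γ'.length + 2) * 3 ^ k + 1 := by
              rw [hN]
              simp [List.length_cons]
            show (r.α ++ γ').length * 3 ^ k + 1 ≤ N
            omega
          · rw [if_neg hc] at hA
            exact absurd hA (by simp)
    rw [hcong, ← ks1_succ]
    refine ks1_stab S hΔ k hfix (p, γ) (N + 1) ?_
    simp only []
    omega
  · -- μ dominates every fixed point of (1)
    intro g hg c
    have hgpath : ∀ (σ : List (PDSRule P Γ D)) (c : PDSConfig P Γ), (∀ r ∈ σ, r ∈ Δ) →
        Steps σ c (pf, ([] : List Γ)) → S.le (g c) (seqWeight S σ) := by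
      intro σ
      induction σ with
      | nil =>
        intro c _ hst
        have hc : c = (pf, ([] : List Γ)) := hst
        rw [hc, ← hg (pf, ([] : List Γ)), rhs1_eq]
        refine le_trans S (add_le_left S _ _) ?_
        unfold Ifun
        rw [if_pos rfl]
        exact le_refl S _
      | cons r σ' ih =>
        intro c hsub hst
        obtain ⟨c'', hsb, hst'⟩ := hst
        rw [← hg c, rhs1_eq]
        refine le_trans S (add_le_right S _ _) (le_trans S (combine_le_of_mem S
          (List.mem_map.mpr ⟨r, hsub r (by simp), rfl⟩)) ?_)
        rw [stepBy_apply hsb]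
        show S.le (S.mul r.d (g c'')) (S.mul r.d (seqWeight S σ'))
        exact mul_le_mul S (le_refl S r.d)
          (ih c'' (fun r' h' => hsub r' (by simp [h'])) hst')
    have h1 : S.le (g c) (ks1 S Δ (pf, ([] : List Γ)) (c.2.length * 3 ^ k + 1) c) := by
      have h := ks1_upper S (Δ := Δ) (pf := pf) (c.2.length * 3 ^ k + 1) S.one (g c) c ?_
      · rwa [S.one_mul] at h
      · intro σ hσΔ hst
        rw [S.one_mul]
        exact hgpath σ c hσΔ hst
    rwa [ks1_stab S hΔ k hfix c _ (Nat.le_refl _)] at h1
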